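/- Let G be a (P_5, complement of (K_3+2P_1))-free graph containing an induced antihole C = complement of C_{2t+1} (t ≥ 2) with vertices indexed so that v_i v_j ∈ E iff |i−j|>1. Then every vertex with no neighbor on C is nonadjacent to every vertex in S_2 (the set of vertices with exactly two neighbors on C). -/

import Mathlib

open SimpleGraph
open Fin.NatCast Fin.CommRing

/-- `G` contains no induced subgraph isomorphic to `H`. -/
def HFree {W V : Type*} (H : SimpleGraph W) (G : SimpleGraph V) : Prop :=
  IsEmpty (H ↪g G)

/-- `G` is `k`-vertex-critical: `χ(G) = k` and deleting any vertex decreases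
the chromatic number below `k`. -/
def IsKVertexCritical {V : Type*} (G : SimpleGraph V) (k : ℕ) : Prop :=
  G.chromaticNumber = k ∧ ∀ v : V, (G.induce {v}ᶜ).chromaticNumber < k

/-- The star `K_{1,s}`: center `0`, leaves `1, …, s`. -/
def starGraph (s : ℕ) : SimpleGraph (Fin (s + 1)) :=
  SimpleGraph.fromRel (fun i _ => (i : ℕ) = 0)

/-- `K_{1,s} + P_1`: the disjoint union of the star `K_{1,s}`
(center `0`, leaves `1, …, s`) and the isolated vertex `s + 1`. -/
def starPlusP1 (s : ℕ) : SimpleGraph (Fin (s + 2)) :=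
  SimpleGraph.fromRel (fun i j => (i : ℕ) = 0 ∧ (j : ℕ) ≠ 0 ∧ (j : ℕ) ≤ s)

/-- The complement of `K_3 + 2P_1`: vertices `0,1,2` pairwise nonadjacent,
vertices `3,4` adjacent to everything else. -/
def coK3Plus2P1 : SimpleGraph (Fin 5) :=
  SimpleGraph.fromRel (fun i j => 3 ≤ (i : ℕ) ∨ 3 ≤ (j : ℕ))

lemma fin_ne_of_sub {n : ℕ} [NeZero n] {x y : Fin n} {k : ℕ} (h : x - y = (k : ℕ)) (hd : ¬ n ∣ k) : x ≠ y := by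
  intro he
  apply hd
  rw [← Fin.natCast_eq_zero, ← h, he, sub_self]

lemma fin_neg_cast {n k : ℕ} [NeZero n] (h : k ≤ n) : -((k:ℕ) : Fin n) = ((n - k : ℕ) : Fin n) := by
  rw [neg_eq_iff_add_eq_zero, ← Nat.cast_add, Fin.natCast_eq_zero]
  exact ⟨1, by omega⟩

lemma antihole_adj {n : ℕ} [NeZero n] {x y : Fin n} {k j : ℕ}
    (h1 : x - y = (k:ℕ)) (h2 : y - x = (j:ℕ)) (hk : k < n) (hj : j < n)
    (hk1 : k ≠ 1) (hj1 : j ≠ 1) (hk0 : k ≠ 0) : ((cycleGraph n)ᶜ).Adj x y := by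
  rw [compl_adj]
  refine ⟨fin_ne_of_sub h1 (fun hd => hk0 (Nat.eq_zero_of_dvd_of_lt hd hk)), fun hadj => ?_⟩
  rw [cycleGraph_adj'] at hadj
  rcases hadj with h | h
  · rw [h1, Fin.val_cast_of_lt hk] at h; exact hk1 h
  · rw [h2, Fin.val_cast_of_lt hj] at h; exact hj1 h

lemma cycle_adj_of_sub {n : ℕ} [NeZero n] (hn : 1 < n) {x y : Fin n} (h : y - x = ((1:ℕ) : Fin n)) :
    (cycleGraph n).Adj x y :=
  cycleGraph_adj'.mpr (Or.inr (by rw [h]; exact Fin.val_cast_of_lt hn))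

lemma cycle_adj_of_sub' {n : ℕ} [NeZero n] (hn : 1 < n) {x y : Fin n} (h : x - y = ((1:ℕ) : Fin n)) :
    (cycleGraph n).Adj x y :=
  cycleGraph_adj'.mpr (Or.inl (by rw [h]; exact Fin.val_cast_of_lt hn))

lemma aux {V : Type*} {G : SimpleGraph V}
    (hP5 : IsEmpty (pathGraph 5 ↪g G))
    {n : ℕ} (f : ((cycleGraph n)ᶜ) ↪g G)
    {u w : V} (huv : G.Adj u w)
    (hu : u ∉ Set.range f) (hu0 : ∀ i, ¬ G.Adj u (f i))
    (hv : w ∉ Set.range f)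
    (a y z : Fin n)
    (hva : G.Adj w (f a)) (hvy : ¬ G.Adj w (f y)) (hvz : ¬ G.Adj w (f z))
    (hay : ((cycleGraph n)ᶜ).Adj a y) (hyz : ((cycleGraph n)ᶜ).Adj y z)
    (haz : ¬ ((cycleGraph n)ᶜ).Adj a z) : False := by
  have hne_ay : a ≠ y := hay.ne
  have hne_yz : y ≠ z := hyz.ne
  have hne_az : a ≠ z := fun h => hvz (h ▸ hva)
  have hGay : G.Adj (f a) (f y) := f.map_adj_iff.mpr hay
  have hGyz : G.Adj (f y) (f z) := f.map_adj_iff.mpr hyz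
  have hGaz : ¬ G.Adj (f a) (f z) := fun h => haz (f.map_adj_iff.mp h)
  have h1 : u ≠ f a := fun h => hu ⟨a, h.symm⟩
  have h2 : u ≠ f y := fun h => hu ⟨y, h.symm⟩
  have h3 : u ≠ f z := fun h => hu ⟨z, h.symm⟩
  have h4 : w ≠ f a := fun h => hv ⟨a, h.symm⟩
  have h5 : w ≠ f y := fun h => hv ⟨y, h.symm⟩
  have h6 : w ≠ f z := fun h => hv ⟨z, h.symm⟩
  have huw : u ≠ w := huv.ne
  have hfne_ay : f a ≠ f y := fun h => hne_ay (f.injective h)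
  have hfne_yz : f y ≠ f z := fun h => hne_yz (f.injective h)
  have hfne_az : f a ≠ f z := fun h => hne_az (f.injective h)
  have h02 : ¬ G.Adj u (f a) := hu0 a
  have h03 : ¬ G.Adj u (f y) := hu0 y
  have h04 : ¬ G.Adj u (f z) := hu0 z
  have hginj : Function.Injective ![u, w, f a, f y, f z] := by
    intro i j hij
    fin_cases i <;> fin_cases j <;> simp_all
  refine hP5.false ⟨⟨![u, w, f a, f y, f z], hginj⟩, ?_⟩
  intro i j
  fin_cases i <;> fin_cases j <;>
    simp_all [pathGraph_adj, adj_comm] <;> decide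

theorem stmt12 {V : Type*} (G : SimpleGraph V)
    (hP5 : HFree (pathGraph 5) G) (hH : HFree coK3Plus2P1 G)
    (t : ℕ) (ht : 2 ≤ t) (f : ((cycleGraph (2 * t + 1))ᶜ) ↪g G)
    (u : V) (hu : u ∉ Set.range f) (hu0 : ∀ i, ¬ G.Adj u (f i))
    (v : V) (hv : v ∉ Set.range f)
    (hv2 : {i : Fin (2 * t + 1) | G.Adj v (f i)}.ncard = 2) :
    ¬ G.Adj u v := by
  intro huv
  haveI : NeZero (2*t+1) := ⟨by omega⟩
  have hn5 : 5 ≤ 2*t+1 := by omega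
  obtain ⟨a, b, hab, hS⟩ := Set.ncard_eq_two.mp hv2
  have hva : G.Adj v (f a) := by
    have : a ∈ {i : Fin (2*t+1) | G.Adj v (f i)} := by rw [hS]; exact Set.mem_insert _ _
    exact this
  have hnadj : ∀ c : Fin (2*t+1), c ≠ a → c ≠ b → ¬ G.Adj v (f c) := by
    intro c hc1 hc2 hadj
    have hc : c ∈ ({a, b} : Set (Fin (2*t+1))) := hS ▸ (show c ∈ {i | G.Adj v (f i)} from hadj)
    rcases hc with h | h
    · exact hc1 h
    · exact hc2 h
  have nd : ∀ k : ℕ, k ≠ 0 → k < 2*t+1 → ¬ (2*t+1) ∣ k := fun k h0 h5 hd =>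
    absurd (Nat.le_of_dvd (by omega) hd) (by omega)
  have nd6 : ¬ (2*t+1) ∣ 6 := by
    intro hd
    have := Nat.le_of_dvd (by norm_num) hd
    have ht2 : t = 2 := by omega
    subst ht2
    omega
  by_cases hb : b = a + 1 ∨ b = a + 3
  · -- use y = a - 3, z = a - 1
    apply aux hP5 f huv hu hu0 hv a (a-3) (a-1) hva
    · -- ¬ Adj v (f (a-3))
      apply hnadj
      · exact (fin_ne_of_sub (x := a) (y := a - 3) (k := 3) (by push_cast; ring) (nd 3 (by omega) (by omega))).symm
      · rcases hb with rfl | rfl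
        · exact (fin_ne_of_sub (x := a + 1) (y := a - 3) (k := 4) (by push_cast; ring) (nd 4 (by omega) (by omega))).symm
        · exact (fin_ne_of_sub (x := a + 3) (y := a - 3) (k := 6) (by push_cast; ring) nd6).symm
    · -- ¬ Adj v (f (a-1))
      apply hnadj
      · exact (fin_ne_of_sub (x := a) (y := a - 1) (k := 1) (by push_cast; ring) (nd 1 (by omega) (by omega))).symm
      · rcases hb with rfl | rfl
        · exact (fin_ne_of_sub (x := a + 1) (y := a - 1) (k := 2) (by push_cast; ring) (nd 2 (by omega) (by omega))).symm
        · exact (fin_ne_of_sub (x := a + 3) (y := a - 1) (k := 4) (by push_cast; ring) (nd 4 (by omega) (by omega))).symm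
    · -- antihole a (a-3)
      refine antihole_adj (k := 3) (j := 2*t+1-3) (by push_cast; ring) ?_ (by omega) (by omega) (by omega) (by omega) (by omega)
      rw [show ((a:Fin (2*t+1)) - 3 - a) = -((3:ℕ) : Fin (2*t+1)) by push_cast; ring, fin_neg_cast (by omega)]
    · -- antihole (a-3) (a-1)
      refine antihole_adj (k := 2*t+1-2) (j := 2) ?_ (by push_cast; ring) (by omega) (by omega) (by omega) (by omega) (by omega)
      rw [show ((a:Fin (2*t+1)) - 3 - (a - 1)) = -((2:ℕ) : Fin (2*t+1)) by push_cast; ring, fin_neg_cast (by omega)]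
    · -- ¬ antihole a (a-1)
      intro h
      exact ((compl_adj _ _ _).mp h).2 (cycle_adj_of_sub' (by omega) (by push_cast; ring))
  · push_neg at hb
    -- use y = a + 3, z = a + 1
    apply aux hP5 f huv hu hu0 hv a (a+3) (a+1) hva
    · apply hnadj
      · exact (fin_ne_of_sub (x := a + 3) (y := a) (k := 3) (by push_cast; ring) (nd 3 (by omega) (by omega)))
      · exact fun h => hb.2 h.symm
    · apply hnadj
      · exact (fin_ne_of_sub (x := a + 1) (y := a) (k := 1) (by push_cast; ring) (nd 1 (by omega) (by omega)))
      · exact fun h => hb.1 h.symm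
    · -- antihole a (a+3)
      refine antihole_adj (k := 2*t+1-3) (j := 3) ?_ (by push_cast; ring) (by omega) (by omega) (by omega) (by omega) (by omega)
      rw [show ((a:Fin (2*t+1)) - (a + 3)) = -((3:ℕ) : Fin (2*t+1)) by push_cast; ring, fin_neg_cast (by omega)]
    · -- antihole (a+3) (a+1)
      refine antihole_adj (k := 2) (j := 2*t+1-2) (by push_cast; ring) ?_ (by omega) (by omega) (by omega) (by omega) (by omega)
      rw [show ((a:Fin (2*t+1)) + 1 - (a + 3)) = -((2:ℕ) : Fin (2*t+1)) by push_cast; ring, fin_neg_cast (by omega)]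
    · intro h
      exact ((compl_adj _ _ _).mp h).2 (cycle_adj_of_sub (by omega) (by push_cast; ring))
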